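/- For every θ-Hölder potential A : Ω → ℂ (0 < θ < 1) there exist a θ-Hölder map A* : Ω* → ℂ and a θ-Hölder map W : X → ℂ such that A*(y) = A(τ_y(x)) + W(σ̂⁻¹(y|x)) − W(y|x) for all (y|x) ∈ X (in particular the right-hand side does not depend on x), with the estimates ‖W‖_θ ≤ 3θ‖A‖_θ/(1−θ) and ‖A*‖_θ ≤ 2‖A‖_θ/(1−θ). -/

import Mathlib

open scoped BigOperators
open Filter Topology

noncomputable section

/-- The one-sided shift space on `d` symbols (also used for the backwards copy `Ω*`). -/
abbrev Bsp (d : ℕ) := ℕ → Fin d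

/-- `agree n x x'` : the first `n` coordinates of `x` and `x'` coincide (`x ∼ₙ x'`). -/
def agree {d : ℕ} (n : ℕ) (x x' : Bsp d) : Prop := ∀ i < n, x i = x' i

/-- `C` is a `θ`-Hölder constant for `f`. -/
def HolderC {d : ℕ} {E : Type*} [SeminormedAddGroup E] (θ : ℝ) (f : Bsp d → E) (C : ℝ) : Prop :=
  ∀ (n : ℕ) (x x' : Bsp d), agree n x x' → ‖f x - f x'‖ ≤ C * θ ^ n

/-- `C` is a `θ`-Hölder constant for a two-variable kernel on `X = Ω* × Ω`. -/
def HolderC2 {d : ℕ} (θ : ℝ) (k : Bsp d → Bsp d → ℂ) (C : ℝ) : Prop :=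
  ∀ (n : ℕ) (y y' x x' : Bsp d), agree n y y' → agree n x x' →
    ‖k y x - k y' x'‖ ≤ C * θ ^ n

/-- The one-sided shift `σ` (same formula for `σ*` on the backwards copy). -/
def shift {d : ℕ} (x : Bsp d) : Bsp d := fun i => x (i + 1)

/-- Prepend one symbol: `cons a x = (a x)` (for `Ω*` this appends `a` as the new `y₁`). -/
def cons {d : ℕ} (a : Fin d) (x : Bsp d) : Bsp d := fun n => if n = 0 then a else x (n - 1)

/-- `prep y k x = (y_k … y_1 x)` : prepend the first `k` symbols of `y` (in reversed order) to `x`. -/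
def prep {d : ℕ} (y : Bsp d) (k : ℕ) (x : Bsp d) : Bsp d :=
  fun n => if n < k then y (k - 1 - n) else x (n - k)

/-- `prepW s x = (x₁ … xₙ x)` where `s i = x_{i+1}`. -/
def prepW {d n : ℕ} (s : Fin n → Fin d) (x : Bsp d) : Bsp d :=
  fun m => if h : m < n then s ⟨m, h⟩ else x (m - n)

/-- `appW y s = (y x₁ … xₙ) ∈ Ω*` where `s i = x_{i+1}` (so the new `y₁` is `xₙ`). -/
def appW {d n : ℕ} (y : Bsp d) (s : Fin n → Fin d) : Bsp d :=
  fun m => if h : m < n then s ⟨n - 1 - m, by omega⟩ else y (m - n)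

/-- Birkhoff sum `Aⁿ(x) = Σ_{k<n} A(σᵏ x)`. -/
def birkhoff {d : ℕ} (A : Bsp d → ℂ) (n : ℕ) (x : Bsp d) : ℂ :=
  ∑ k ∈ Finset.range n, A (fun i => x (i + k))

/-- Ruelle operator with a priori probability weights `w` on the symbols. -/
def Ruelle {d : ℕ} (w : Fin d → ℝ) (A : Bsp d → ℂ) (φ : Bsp d → ℂ) (x : Bsp d) : ℂ :=
  ∑ a : Fin d, (w a : ℂ) * (Complex.exp (A (cons a x)) * φ (cons a x))

/-- Koopman operator `U_B φ = e^B · (φ ∘ σ)`. -/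
def Koop {d : ℕ} (B : Bsp d → ℂ) (φ : Bsp d → ℂ) (x : Bsp d) : ℂ :=
  Complex.exp (B x) * φ (shift x)

/-- The measures `D_{n,x'}` paired against `φ`, with reference symbol `o` (for `0^∞`). -/
def Dn {d : ℕ} (w : Fin d → ℝ) (A : Bsp d → ℂ) (W : Bsp d → Bsp d → ℂ) (ψ : Bsp d → ℂ)
    (lam : ℂ) (o : Fin d) (n : ℕ) (x' : Bsp d) (φ : Bsp d → ℂ) : ℂ :=
  ∑ s : Fin n → Fin d, ((∏ i, w (s i) : ℝ) : ℂ) *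
    (ψ (prepW s x') * (Complex.exp (birkhoff A n (prepW s x')) / lam ^ n) *
      Complex.exp (-(W (appW (fun _ => o) s) x')) * φ (appW (fun _ => o) s))

namespace DualAux

variable {d : ℕ} {θ : ℝ}

lemma agree_shift {n : ℕ} {y y' : Bsp d} (h : agree (n+1) y y') : agree n (shift y) (shift y') :=
  fun m hm => h (m+1) (by omega)

lemma prep_one (y x : Bsp d) : prep y 1 x = cons (y 0) x := by
  funext m
  simp only [prep, cons]
  rcases Nat.eq_zero_or_pos m with h | h
  · subst h; simp
  · rw [if_neg (by omega), if_neg (by omega)]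

lemma prep_shift_cons (y x : Bsp d) (n : ℕ) :
    prep (shift y) n (cons (y 0) x) = prep y (n+1) x := by
  funext m
  simp only [prep, cons, shift]
  rcases lt_trichotomy m n with h | h | h
  · rw [if_pos h, if_pos (by omega)]; congr 1 <;> omega
  · rw [if_neg (by omega), if_pos (by omega), if_pos (by omega)]
    congr 1 <;> omega
  · rw [if_neg (by omega), if_neg (by omega), if_neg (by omega)]
    congr 1 <;> omega

lemma agree_prep_prep {n k : ℕ} {y y' x x' : Bsp d} (hk : k ≤ n) (hy : agree n y y')
    (hx : agree n x x') : agree (n + k) (prep y k x) (prep y' k x') := by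
  intro m hm
  simp only [prep]
  split_ifs with h
  · exact hy _ (by omega)
  · exact hx _ (by omega)

lemma prep_eq_of_agree {n k : ℕ} {y y' : Bsp d} (hy : agree n y y') (hk : k ≤ n) (z : Bsp d) :
    prep y k z = prep y' k z := by
  funext m
  simp only [prep]
  split_ifs with h
  · exact hy _ (by omega)
  · rfl

lemma agree_prep_self (y : Bsp d) (k : ℕ) (x x' : Bsp d) :
    agree k (prep y k x) (prep y k x') := by
  intro m hm
  simp only [prep]
  rw [if_pos hm, if_pos hm]

lemma agree_prep_shift (y : Bsp d) (k : ℕ) (z : Bsp d) :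
    agree k (prep y (k+1) z) (prep (shift y) k z) := by
  intro m hm
  simp only [prep, shift]
  rw [if_pos (by omega), if_pos hm]
  congr 1; omega

lemma summable_const_geom (hθ0 : 0 < θ) (hθ1 : θ < 1) (c : ℝ) (m : ℕ) :
    Summable (fun k : ℕ => c * θ ^ (k + m)) := by
  have h := (summable_geometric_of_lt_one hθ0.le hθ1).mul_left (c * θ ^ m)
  refine h.congr fun k => ?_
  rw [pow_add]; ring

lemma tsum_const_geom (hθ0 : 0 < θ) (hθ1 : θ < 1) (c : ℝ) (m : ℕ) :
    ∑' k : ℕ, c * θ ^ (k + m) = c * θ ^ m * (1 - θ)⁻¹ := by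
  calc ∑' k : ℕ, c * θ ^ (k + m) = ∑' k : ℕ, (c * θ ^ m) * θ ^ k := by
        refine tsum_congr fun k => ?_
        rw [pow_add]; ring
    _ = (c * θ ^ m) * ∑' k : ℕ, θ ^ k := tsum_mul_left
    _ = c * θ ^ m * (1 - θ)⁻¹ := by rw [tsum_geometric_of_lt_one hθ0.le hθ1]

/-- Terms of the involution kernel series. -/
def Fterm (A : Bsp d → ℂ) (x0 y x : Bsp d) (k : ℕ) : ℂ :=
  A (prep y (k+1) x) - A (prep y (k+1) x0)

/-- Terms of the dual potential series. -/
def Gterm (A : Bsp d → ℂ) (x0 y : Bsp d) (k : ℕ) : ℂ :=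
  A (prep y (k+1+1) x0) - A (prep (shift y) (k+1) x0)

end DualAux

open DualAux

/-- existence of a θ-Hölder dual potential `A*` and involution kernel `W`
with `A*(y) = A(τ_y x) + W(σ̂⁻¹(y|x)) − W(y|x)`, `‖W‖_θ ≤ 3θ‖A‖_θ/(1−θ)` and
`‖A*‖_θ ≤ 2‖A‖_θ/(1−θ)`. -/
theorem exists_dual_potential {d : ℕ} {θ : ℝ} (hθ0 : 0 < θ) (hθ1 : θ < 1)
    (A : Bsp d → ℂ) (CA : ℝ) (hA : HolderC θ A CA) :
    ∃ (Astar : Bsp d → ℂ) (W : Bsp d → Bsp d → ℂ),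
      HolderC θ Astar (2 * CA / (1 - θ)) ∧
      HolderC2 θ W (3 * θ * CA / (1 - θ)) ∧
      ∀ (y x : Bsp d),
        Astar y = A (cons (y 0) x) + W (shift y) (cons (y 0) x) - W y x := by
  rcases Nat.eq_zero_or_pos d with hd | hd
  · subst hd
    exact ⟨fun _ => 0, fun _ _ => 0,
      fun n x _ _ => (x 0).elim0, fun n y _ _ _ _ _ => (y 0).elim0,
      fun y _ => (y 0).elim0⟩
  -- main case
  have h1θ : 0 < 1 - θ := by linarith
  set x0 : Bsp d := fun _ => ⟨0, hd⟩ with hx0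
  have hCA : 0 ≤ CA := by
    have h := hA 0 x0 x0 (fun i hi => rfl)
    simpa using h
  have hgeo := summable_geometric_of_lt_one hθ0.le hθ1
  -- term bounds
  have hFb : ∀ (y x : Bsp d) (k : ℕ), ‖Fterm A x0 y x k‖ ≤ CA * θ ^ (k + 1) :=
    fun y x k => hA (k+1) _ _ (agree_prep_self y (k+1) x x0)
  have hGb : ∀ (y : Bsp d) (k : ℕ), ‖Gterm A x0 y k‖ ≤ CA * θ ^ (k + 1) :=
    fun y k => hA (k+1) _ _ (agree_prep_shift y (k+1) x0)
  have hFs : ∀ (y x : Bsp d), Summable (Fterm A x0 y x) :=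
    fun y x => Summable.of_norm_bounded (summable_const_geom hθ0 hθ1 CA 1) (hFb y x)
  have hGs : ∀ (y : Bsp d), Summable (Gterm A x0 y) :=
    fun y => Summable.of_norm_bounded (summable_const_geom hθ0 hθ1 CA 1) (hGb y)
  refine ⟨fun y => A (cons (y 0) x0) + ∑' k, Gterm A x0 y k,
          fun y x => ∑' k, Fterm A x0 y x k, ?_, ?_, ?_⟩
  · -- Hölder bound for A*
    intro n y y' hy
    have hGG : Summable (fun k => Gterm A x0 y k - Gterm A x0 y' k) := (hGs y).sub (hGs y')
    have key : (A (cons (y 0) x0) + ∑' k, Gterm A x0 y k)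
        - (A (cons (y' 0) x0) + ∑' k, Gterm A x0 y' k)
        = (A (cons (y 0) x0) - A (cons (y' 0) x0))
          + ∑' k, (Gterm A x0 y k - Gterm A x0 y' k) := by
      rw [Summable.tsum_sub (hGs y) (hGs y')]; ring
    have hd2 : ∀ k, ‖Gterm A x0 y k - Gterm A x0 y' k‖ ≤ 2 * CA * θ ^ (k + 1) := by
      intro k
      refine (norm_sub_le _ _).trans ?_
      have h1 := hGb y k
      have h2 := hGb y' k
      linarith
    cases n with
    | zero =>
      have ht0 : ‖A (cons (y 0) x0) - A (cons (y' 0) x0)‖ ≤ CA := by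
        have h := hA 0 (cons (y 0) x0) (cons (y' 0) x0) (fun i hi => absurd hi (Nat.not_lt_zero i))
        simpa using h
      have hns : Summable (fun k => ‖Gterm A x0 y k - Gterm A x0 y' k‖) :=
        Summable.of_nonneg_of_le (fun k => norm_nonneg _) hd2 (summable_const_geom hθ0 hθ1 (2*CA) 1)
      have hsum : ∑' k, ‖Gterm A x0 y k - Gterm A x0 y' k‖ ≤ 2 * CA * θ ^ 1 * (1 - θ)⁻¹ := by
        rw [← tsum_const_geom hθ0 hθ1 (2*CA) 1]
        exact Summable.tsum_le_tsum hd2 hns (summable_const_geom hθ0 hθ1 (2*CA) 1)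
      have hchain : ‖(A (cons (y 0) x0) + ∑' k, Gterm A x0 y k)
          - (A (cons (y' 0) x0) + ∑' k, Gterm A x0 y' k)‖
          ≤ CA + 2 * CA * θ ^ 1 * (1 - θ)⁻¹ := by
        rw [key]
        refine (norm_add_le _ _).trans ?_
        have := norm_tsum_le_tsum_norm hns
        linarith
      refine hchain.trans ?_
      have hu : (1 - θ) * (1 - θ)⁻¹ = 1 := mul_inv_cancel₀ h1θ.ne'
      have hu0 : 0 ≤ (1 - θ)⁻¹ := (inv_pos.2 h1θ).le
      rw [pow_zero, mul_one, pow_one, div_eq_mul_inv]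
      nlinarith [mul_nonneg hCA hu0]
    | succ m =>
      have ht0 : A (cons (y 0) x0) = A (cons (y' 0) x0) := by
        rw [hy 0 (by omega)]
      set b : ℕ → ℝ := fun k => if k < m then 0 else 2 * CA * θ ^ (k + 1) with hbdef
      have hb0 : ∀ k, 0 ≤ b k := by
        intro k; rw [hbdef]; dsimp only
        split_ifs
        · exact le_refl 0
        · positivity
      have hble : ∀ k, b k ≤ 2 * CA * θ ^ (k + 1) := by
        intro k; rw [hbdef]; dsimp only
        split_ifs
        · positivity
        · exact le_refl _
      have hbs : Summable b :=
        Summable.of_nonneg_of_le hb0 hble (summable_const_geom hθ0 hθ1 (2*CA) 1)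
      have hd3 : ∀ k, ‖Gterm A x0 y k - Gterm A x0 y' k‖ ≤ b k := by
        intro k; rw [hbdef]; dsimp only
        split_ifs with hk
        · have e1 : prep y (k+1+1) x0 = prep y' (k+1+1) x0 :=
            prep_eq_of_agree hy (by omega) x0
          have e2 : prep (shift y) (k+1) x0 = prep (shift y') (k+1) x0 :=
            prep_eq_of_agree (agree_shift hy) (by omega) x0
          simp [Gterm, e1, e2]
        · exact hd2 k
      have hns : Summable (fun k => ‖Gterm A x0 y k - Gterm A x0 y' k‖) :=
        Summable.of_nonneg_of_le (fun k => norm_nonneg _) hd3 hbs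
      have hsumb : ∑' k, b k = 2 * CA * θ ^ (m + 1) * (1 - θ)⁻¹ := by
        rw [← Summable.sum_add_tsum_nat_add m hbs]
        have hz : ∑ k ∈ Finset.range m, b k = 0 :=
          Finset.sum_eq_zero fun k hk => by
            rw [hbdef]; dsimp only; rw [if_pos (Finset.mem_range.1 hk)]
        have ht : ∑' k : ℕ, b (k + m) = 2 * CA * θ ^ (m + 1) * (1 - θ)⁻¹ := by
          rw [← tsum_const_geom hθ0 hθ1 (2*CA) (m+1)]
          refine tsum_congr fun k => ?_
          rw [hbdef]; dsimp only
          rw [if_neg (by omega)]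
          ring
        rw [hz, ht, zero_add]
      rw [key, ht0, sub_self, zero_add]
      refine (norm_tsum_le_tsum_norm hns).trans ?_
      refine ((Summable.tsum_le_tsum hd3 hns hbs).trans hsumb.le).trans ?_
      refine le_of_eq ?_
      rw [div_eq_mul_inv]; ring
  · -- Hölder bound for W
    intro n y y' x x' hy hx
    dsimp only
    rw [← Summable.tsum_sub (hFs y x) (hFs y' x')]
    set b : ℕ → ℝ := fun k => if k < n then CA * θ ^ (n + (k+1)) else 2 * CA * θ ^ (k + 1)
      with hbdef
    have hble : ∀ k, b k ≤ 2 * CA * θ ^ (k + 1) := by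
      intro k; rw [hbdef]; dsimp only
      split_ifs
      · have hp := pow_le_pow_of_le_one hθ0.le hθ1.le (show k + 1 ≤ n + (k+1) by omega)
        nlinarith [mul_le_mul_of_nonneg_left hp hCA,
          mul_nonneg hCA (pow_nonneg hθ0.le (k+1))]
      · exact le_refl _
    have hb0 : ∀ k, 0 ≤ b k := by
      intro k; rw [hbdef]; dsimp only; split_ifs <;> positivity
    have hbs : Summable b :=
      Summable.of_nonneg_of_le hb0 hble (summable_const_geom hθ0 hθ1 (2*CA) 1)
    have hd3 : ∀ k, ‖Fterm A x0 y x k - Fterm A x0 y' x' k‖ ≤ b k := by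
      intro k; rw [hbdef]; dsimp only
      split_ifs with hk
      · have he : prep y (k+1) x0 = prep y' (k+1) x0 := prep_eq_of_agree hy (by omega) x0
        have e2 : Fterm A x0 y x k - Fterm A x0 y' x' k
            = A (prep y (k+1) x) - A (prep y' (k+1) x') := by
          simp only [Fterm]; rw [he]; ring
        rw [e2]
        exact hA (n + (k+1)) _ _ (agree_prep_prep (by omega) hy hx)
      · refine (norm_sub_le _ _).trans ?_
        have h1 := hFb y x k
        have h2 := hFb y' x' k
        linarith
    have hns : Summable (fun k => ‖Fterm A x0 y x k - Fterm A x0 y' x' k‖) :=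
      Summable.of_nonneg_of_le (fun k => norm_nonneg _) hd3 hbs
    have hsumb : ∑' k, b k ≤ 3 * CA * θ ^ (n + 1) * (1 - θ)⁻¹ := by
      rw [← Summable.sum_add_tsum_nat_add n hbs]
      have h1 : ∑ k ∈ Finset.range n, b k ≤ CA * θ ^ (n + 1) * (1 - θ)⁻¹ := by
        have e : ∑ k ∈ Finset.range n, b k
            = ∑ k ∈ Finset.range n, (CA * θ ^ (n+1)) * θ ^ k := by
          refine Finset.sum_congr rfl fun k hk => ?_
          rw [hbdef]; dsimp only; rw [if_pos (Finset.mem_range.1 hk)]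
          ring
        rw [e, ← Finset.mul_sum]
        have hle : ∑ k ∈ Finset.range n, θ ^ k ≤ (1 - θ)⁻¹ := by
          refine le_trans (Summable.sum_le_tsum _ (fun i _ => pow_nonneg hθ0.le i) hgeo) ?_
          rw [tsum_geometric_of_lt_one hθ0.le hθ1]
        exact mul_le_mul_of_nonneg_left hle (by positivity)
      have h2 : ∑' k : ℕ, b (k + n) = 2 * CA * θ ^ (n + 1) * (1 - θ)⁻¹ := by
        rw [← tsum_const_geom hθ0 hθ1 (2*CA) (n+1)]
        refine tsum_congr fun k => ?_
        rw [hbdef]; dsimp only; rw [if_neg (by omega)]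
        ring
      rw [h2]; linarith
    refine (norm_tsum_le_tsum_norm hns).trans ?_
    refine ((Summable.tsum_le_tsum hd3 hns hbs).trans hsumb).trans ?_
    refine le_of_eq ?_
    have hne : (1 : ℝ) - θ ≠ 0 := h1θ.ne'
    field_simp
    ring
  · -- functional equation
    intro y x
    dsimp only
    have h1 : ∀ k : ℕ, Fterm A x0 (shift y) (cons (y 0) x) k
        = Gterm A x0 y k + Fterm A x0 y x (k+1) := by
      intro k
      simp only [Fterm, Gterm]
      rw [prep_shift_cons y x (k+1)]
      ring
    have hFsucc : Summable (fun k => Fterm A x0 y x (k+1)) := by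
      have h := hFs y x
      exact (summable_nat_add_iff 1).2 h
    have h2 : ∑' k, Fterm A x0 (shift y) (cons (y 0) x) k
        = (∑' k, Gterm A x0 y k) + ∑' k, Fterm A x0 y x (k+1) := by
      rw [tsum_congr h1, Summable.tsum_add (hGs y) hFsucc]
    have h3 : ∑' k, Fterm A x0 y x k = Fterm A x0 y x 0 + ∑' k, Fterm A x0 y x (k+1) :=
      Summable.tsum_eq_zero_add (hFs y x)
    have h4 : Fterm A x0 y x 0 = A (cons (y 0) x) - A (cons (y 0) x0) := by
      simp only [Fterm, zero_add]
      rw [prep_one, prep_one]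
    rw [h2, h3, h4]
    ring
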